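/- The polynomial w(z) = z[f^+(z),f^-(z)] does not vanish on the unit circle except possibly at z = ±1. Moreover, w and s^-(z) = z[f^-(z^{-1}), f^+(z)] cannot vanish simultaneously at any point of ℂ∖{0, 1, −1}. -/

import Mathlib

/-- The modified Wronskian `[f,g]ₙ = aₙ (f(n) g(n+1) − f(n+1) g(n))`. -/
def modWron (a : ℤ → ℝ) (f g : ℤ → ℂ) (n : ℤ) : ℂ :=
  (a n : ℂ) * (f n * g (n + 1) - f (n + 1) * g n)

def JSol (a b : ℤ → ℝ) (E : ℂ) (f : ℤ → ℂ) : Prop := ∀ n : ℤ,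
  (a (n - 1) : ℂ) * f (n - 1) + (a n : ℂ) * f (n + 1) + (b n : ℂ) * f n = E * f n

lemma modWron_step {a b : ℤ → ℝ} {E : ℂ} {f g : ℤ → ℂ}
    (hf : JSol a b E f) (hg : JSol a b E g) (n : ℤ) :
    modWron a f g n = modWron a f g (n - 1) := by
  have h1 := hf n
  have h2 := hg n
  simp only [modWron, sub_add_cancel]
  linear_combination f n * h2 - g n * h1

lemma modWron_const {a b : ℤ → ℝ} {E : ℂ} {f g : ℤ → ℂ}
    (hf : JSol a b E f) (hg : JSol a b E g) (n m : ℤ) :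
    modWron a f g n = modWron a f g m := by
  have key : ∀ k : ℤ, modWron a f g (m + k) = modWron a f g m := by
    intro k
    induction k using Int.induction_on with
    | zero => simp
    | succ i ih =>
      have := modWron_step hf hg (m + (i + 1))
      rw [show m + ((i : ℤ) + 1) - 1 = m + i by ring] at this
      rw [this, ih]
    | pred i ih =>
      have := modWron_step hf hg (m + (-(i : ℤ)))
      rw [show m + (-(i:ℤ)) - 1 = m + (-(i:ℤ) - 1) by ring] at this
      rw [← this, ih]
  have := key (n - m)
  rwa [show m + (n - m) = n by ring] at this

lemma jsol_step_up {a b : ℤ → ℝ} {E : ℂ} {f g : ℤ → ℂ}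
    (hf : JSol a b E f) (hg : JSol a b E g) (n : ℤ) (han : (a (n+1) : ℂ) ≠ 0)
    (h0 : f n = g n) (h1 : f (n + 1) = g (n + 1)) : f (n + 1 + 1) = g (n + 1 + 1) := by
  have e1 := hf (n + 1)
  have e2 := hg (n + 1)
  simp only [add_sub_cancel_right] at e1 e2
  have key : (a (n+1) : ℂ) * (f (n+1+1) - g (n+1+1)) = 0 := by
    linear_combination e1 - e2 - (a n : ℂ) * h0 + (E - (b (n+1) : ℂ)) * h1
  exact sub_eq_zero.mp ((mul_eq_zero.mp key).resolve_left han)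

lemma jsol_step_down {a b : ℤ → ℝ} {E : ℂ} {f g : ℤ → ℂ}
    (hf : JSol a b E f) (hg : JSol a b E g) (n : ℤ) (han : (a (n-1) : ℂ) ≠ 0)
    (h0 : f n = g n) (h1 : f (n + 1) = g (n + 1)) : f (n - 1) = g (n - 1) := by
  have e1 := hf n
  have e2 := hg n
  have key : (a (n-1) : ℂ) * (f (n-1) - g (n-1)) = 0 := by
    linear_combination e1 - e2 - (a n : ℂ) * h1 + (E - (b n : ℂ)) * h0
  exact sub_eq_zero.mp ((mul_eq_zero.mp key).resolve_left han)

lemma jsol_unique {a b : ℤ → ℝ} {E : ℂ} {f g : ℤ → ℂ}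
    (ha : ∀ n, (a n : ℂ) ≠ 0)
    (hf : JSol a b E f) (hg : JSol a b E g) (N : ℤ)
    (h0 : f N = g N) (h1 : f (N + 1) = g (N + 1)) : ∀ n, f n = g n := by
  have key : ∀ k : ℤ, f (N + k) = g (N + k) ∧ f (N + k + 1) = g (N + k + 1) := by
    intro k
    induction k using Int.induction_on with
    | zero => simpa using ⟨h0, h1⟩
    | succ i ih =>
      constructor
      · rw [show N + ((i : ℤ) + 1) = N + i + 1 by ring]; exact ih.2
      · rw [show N + ((i : ℤ) + 1) + 1 = N + i + 1 + 1 by ring]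
        exact jsol_step_up hf hg (N + i) (ha _) ih.1 ih.2
    | pred i ih =>
      constructor
      · rw [show N + (-(i:ℤ) - 1) = (N + -(i:ℤ)) - 1 by ring]
        exact jsol_step_down hf hg (N + -(i:ℤ)) (ha _) ih.1 ih.2
      · rw [show N + (-(i:ℤ) - 1) + 1 = N + -(i:ℤ) by ring]; exact ih.1
  intro n
  have := (key (n - N)).1
  rwa [show N + (n - N) = n by ring] at this

section main
variable {a b : ℤ → ℝ} {Nm Np : ℤ} {fp fm : ℂ → ℤ → ℂ}

lemma key_identity
    (hasupp : ∀ n, n < Nm ∨ Np ≤ n → a n = 1)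
    (hfp : ∀ z : ℂ, z ≠ 0 → JSol a b (z + z⁻¹) (fp z))
    (hfpbc : ∀ z : ℂ, z ≠ 0 → ∀ n : ℤ, Np ≤ n → fp z n = z ^ n)
    (hfm : ∀ z : ℂ, z ≠ 0 → JSol a b (z + z⁻¹) (fm z))
    (hfmbc : ∀ z : ℂ, z ≠ 0 → ∀ n : ℤ, n ≤ Nm → fm z n = z ^ (-n))
    (z : ℂ) (hz : z ≠ 0) (n : ℤ) :
    modWron a (fp z) (fm z) n * modWron a (fp z⁻¹) (fm z⁻¹) n
      - modWron a (fm z⁻¹) (fp z) n * modWron a (fm z) (fp z⁻¹) n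
    = -((z - z⁻¹)^2) := by
  have hz' : z⁻¹ ≠ 0 := inv_ne_zero hz
  have hE : z⁻¹ + (z⁻¹)⁻¹ = z + z⁻¹ := by rw [inv_inv]; ring
  have Su : JSol a b (z + z⁻¹) (fp z) := hfp z hz
  have Sp : JSol a b (z + z⁻¹) (fp z⁻¹) := by
    have := hfp z⁻¹ hz'; rwa [hE] at this
  have Sv : JSol a b (z + z⁻¹) (fm z) := hfm z hz
  have Sq : JSol a b (z + z⁻¹) (fm z⁻¹) := by
    have := hfm z⁻¹ hz'; rwa [hE] at this
  -- evaluate modWron (fp z) (fp z⁻¹) at Np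
  have hEval1 : modWron a (fp z) (fp z⁻¹) n = z⁻¹ - z := by
    rw [modWron_const Su Sp n Np]
    have e1 : fp z Np = z ^ Np := hfpbc z hz Np le_rfl
    have e2 : fp z (Np + 1) = z ^ (Np + 1) := hfpbc z hz _ (by omega)
    have e3 : fp z⁻¹ Np = (z⁻¹) ^ Np := hfpbc z⁻¹ hz' Np le_rfl
    have e4 : fp z⁻¹ (Np + 1) = (z⁻¹) ^ (Np + 1) := hfpbc z⁻¹ hz' _ (by omega)
    have haNp : a Np = 1 := hasupp Np (Or.inr le_rfl)
    have hzn : z ^ Np ≠ 0 := zpow_ne_zero _ hz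
    rw [modWron, e1, e2, e3, e4, haNp]
    rw [inv_zpow, inv_zpow, zpow_add_one₀ hz]
    push_cast
    field_simp
  have hEval2 : modWron a (fm z) (fm z⁻¹) n = z - z⁻¹ := by
    rw [modWron_const Sv Sq n (Nm - 1)]
    have hNm : Nm - 1 + 1 = Nm := by ring
    have e1 : fm z (Nm - 1) = z ^ (-(Nm - 1)) := hfmbc z hz _ (by omega)
    have e2 : fm z (Nm - 1 + 1) = z ^ (-Nm) := by rw [hNm]; exact hfmbc z hz _ le_rfl
    have e3 : fm z⁻¹ (Nm - 1) = (z⁻¹) ^ (-(Nm - 1)) := hfmbc z⁻¹ hz' _ (by omega)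
    have e4 : fm z⁻¹ (Nm - 1 + 1) = (z⁻¹) ^ (-Nm) := by rw [hNm]; exact hfmbc z⁻¹ hz' _ le_rfl
    have haNm : a (Nm - 1) = 1 := hasupp _ (Or.inl (by omega))
    have hzn : z ^ Nm ≠ 0 := zpow_ne_zero _ hz
    rw [modWron, e1, e2, e3, e4, haNm]
    simp only [zpow_neg, inv_zpow, inv_inv]
    rw [show Nm - 1 = Nm + (-1) by ring, zpow_add₀ hz, zpow_neg_one]
    push_cast
    field_simp
  have hP : modWron a (fp z) (fm z) n * modWron a (fp z⁻¹) (fm z⁻¹) n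
      - modWron a (fm z⁻¹) (fp z) n * modWron a (fm z) (fp z⁻¹) n
      = modWron a (fp z) (fp z⁻¹) n * modWron a (fm z) (fm z⁻¹) n := by
    simp only [modWron]; ring
  rw [hP, hEval1, hEval2]; ring

end main

section conjsec
open ComplexConjugate
variable {a b : ℤ → ℝ} {Nm Np : ℤ} {fp fm : ℂ → ℤ → ℂ}

lemma conj_jsol {E : ℂ} {f : ℤ → ℂ} (hf : JSol a b E f) :
    JSol a b (conj E) (fun n => conj (f n)) := by
  intro n
  have := congrArg conj (hf n)
  simpa [map_add, map_mul, Complex.conj_ofReal] using this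

lemma conj_fp (ha : ∀ n, (a n : ℂ) ≠ 0)
    (hfp : ∀ z : ℂ, z ≠ 0 → JSol a b (z + z⁻¹) (fp z))
    (hfpbc : ∀ z : ℂ, z ≠ 0 → ∀ n : ℤ, Np ≤ n → fp z n = z ^ n)
    (z : ℂ) (hz1 : ‖z‖ = 1) : ∀ n, fp z⁻¹ n = conj (fp z n) := by
  have hz : z ≠ 0 := by intro h; simp [h] at hz1
  have hz' : z⁻¹ ≠ 0 := inv_ne_zero hz
  have hc : z⁻¹ = conj z := RCLike.inv_eq_conj hz1
  have hE : conj (z + z⁻¹) = z⁻¹ + (z⁻¹)⁻¹ := by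
    rw [map_add, map_inv₀, ← hc, inv_inv]
  have Sg : JSol a b (z⁻¹ + (z⁻¹)⁻¹) (fun n => conj (fp z n)) := by
    have := conj_jsol (hfp z hz); rwa [hE] at this
  refine jsol_unique ha (hfp z⁻¹ hz') Sg Np ?_ ?_
  · rw [hfpbc z⁻¹ hz' Np le_rfl]
    show _ = conj (fp z Np)
    rw [hfpbc z hz Np le_rfl, hc, ← map_zpow₀]
  · rw [hfpbc z⁻¹ hz' (Np + 1) (by omega)]
    show _ = conj (fp z (Np + 1))
    rw [hfpbc z hz (Np + 1) (by omega), hc, ← map_zpow₀]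

lemma conj_fm (ha : ∀ n, (a n : ℂ) ≠ 0)
    (hfm : ∀ z : ℂ, z ≠ 0 → JSol a b (z + z⁻¹) (fm z))
    (hfmbc : ∀ z : ℂ, z ≠ 0 → ∀ n : ℤ, n ≤ Nm → fm z n = z ^ (-n))
    (z : ℂ) (hz1 : ‖z‖ = 1) : ∀ n, fm z⁻¹ n = conj (fm z n) := by
  have hz : z ≠ 0 := by intro h; simp [h] at hz1
  have hz' : z⁻¹ ≠ 0 := inv_ne_zero hz
  have hc : z⁻¹ = conj z := RCLike.inv_eq_conj hz1
  have hE : conj (z + z⁻¹) = z⁻¹ + (z⁻¹)⁻¹ := by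
    rw [map_add, map_inv₀, ← hc, inv_inv]
  have Sg : JSol a b (z⁻¹ + (z⁻¹)⁻¹) (fun n => conj (fm z n)) := by
    have := conj_jsol (hfm z hz); rwa [hE] at this
  refine jsol_unique ha (hfm z⁻¹ hz') Sg (Nm - 1) ?_ ?_
  · rw [hfmbc z⁻¹ hz' (Nm - 1) (by omega)]
    show _ = conj (fm z (Nm - 1))
    rw [hfmbc z hz (Nm - 1) (by omega), hc, ← map_zpow₀]
  · rw [show Nm - 1 + 1 = Nm by ring, hfmbc z⁻¹ hz' Nm le_rfl]
    show _ = conj (fm z Nm)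
    rw [hfmbc z hz Nm le_rfl, hc, ← map_zpow₀]

end conjsec

open ComplexConjugate in
/-- `w(z) = z[f⁺(z), f⁻(z)]` does not vanish on the unit circle except possibly at `±1`;
moreover `w` and `s⁻(z) = z[f⁻(z⁻¹), f⁺(z)]` cannot vanish simultaneously on
`ℂ∖{0, 1, −1}`. -/
theorem w_nonvanishing_and_no_common_zero (a b : ℤ → ℝ) (Nm Np : ℤ)
    (ha : ∀ n, 0 < a n)
    (hasupp : ∀ n, n < Nm ∨ Np ≤ n → a n = 1)
    (hbsupp : ∀ n, n < Nm ∨ Np < n → b n = 0)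
    (fp fm : ℂ → ℤ → ℂ)
    (hfp : ∀ z : ℂ, z ≠ 0 → ∀ n : ℤ,
      (a (n - 1) : ℂ) * fp z (n - 1) + (a n : ℂ) * fp z (n + 1) + (b n : ℂ) * fp z n
        = (z + z⁻¹) * fp z n)
    (hfpbc : ∀ z : ℂ, z ≠ 0 → ∀ n : ℤ, Np ≤ n → fp z n = z ^ n)
    (hfm : ∀ z : ℂ, z ≠ 0 → ∀ n : ℤ,
      (a (n - 1) : ℂ) * fm z (n - 1) + (a n : ℂ) * fm z (n + 1) + (b n : ℂ) * fm z n
        = (z + z⁻¹) * fm z n)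
    (hfmbc : ∀ z : ℂ, z ≠ 0 → ∀ n : ℤ, n ≤ Nm → fm z n = z ^ (-n)) :
    (∀ z : ℂ, ‖z‖ = 1 → z ≠ 1 → z ≠ -1 → ∀ n : ℤ,
      z * modWron a (fp z) (fm z) n ≠ 0) ∧
    (∀ z : ℂ, z ≠ 0 → z ≠ 1 → z ≠ -1 → ∀ n : ℤ,
      ¬(z * modWron a (fp z) (fm z) n = 0 ∧ z * modWron a (fm z⁻¹) (fp z) n = 0)) := by
  have haz : ∀ n, (a n : ℂ) ≠ 0 := fun n => by exact_mod_cast ne_of_gt (ha n)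
  have hfp' : ∀ z : ℂ, z ≠ 0 → JSol a b (z + z⁻¹) (fp z) := fun z hz => hfp z hz
  have hfm' : ∀ z : ℂ, z ≠ 0 → JSol a b (z + z⁻¹) (fm z) := fun z hz => hfm z hz
  constructor
  · intro z hz1 hz2 hz3 n hw
    have hz : z ≠ 0 := by intro h; simp [h] at hz1
    have hA : modWron a (fp z) (fm z) n = 0 := (mul_eq_zero.mp hw).resolve_left hz
    have key := key_identity hasupp hfp' hfpbc hfm' hfmbc z hz n
    have hcp := conj_fp haz hfp' hfpbc z hz1
    have hcm := conj_fm haz hfm' hfmbc z hz1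
    have hc : z⁻¹ = conj z := RCLike.inv_eq_conj hz1
    set s := modWron a (fm z⁻¹) (fp z) n with hs
    have hB : modWron a (fm z) (fp z⁻¹) n = conj s := by
      rw [hs]
      simp only [modWron, map_mul, map_sub, Complex.conj_ofReal, hcm, hcp, Complex.conj_conj]
    rw [hA, hB, zero_mul, zero_sub, neg_eq_iff_eq_neg, neg_neg] at key
    -- key : s * conj s = (z - z⁻¹)^2
    have him : z.im ≠ 0 := by
      intro h
      have hzr : z = (z.re : ℂ) := by
        apply Complex.ext <;> simp [h]
      rw [hzr] at hz1
      rw [Complex.norm_real] at hz1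
      rcases abs_eq (by norm_num : (0:ℝ) ≤ 1) |>.mp hz1 with h1 | h1
      · exact hz2 (by rw [hzr, h1]; norm_num)
      · exact hz3 (by rw [hzr, h1]; norm_num)
    have heq : (Complex.normSq s : ℂ) = ((-(2*z.im)^2 : ℝ) : ℂ) := by
      rw [← Complex.mul_conj, key, hc, Complex.sub_conj, mul_pow, Complex.I_sq]
      push_cast
      ring
    have heqr : Complex.normSq s = -(2*z.im)^2 := by exact_mod_cast heq
    have hpos : (0:ℝ) < (2*z.im)^2 := by positivity
    linarith [Complex.normSq_nonneg s]
  · rintro z hz hz2 hz3 n ⟨hw, hs0⟩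
    have hA : modWron a (fp z) (fm z) n = 0 := (mul_eq_zero.mp hw).resolve_left hz
    have hS : modWron a (fm z⁻¹) (fp z) n = 0 := (mul_eq_zero.mp hs0).resolve_left hz
    have key := key_identity hasupp hfp' hfpbc hfm' hfmbc z hz n
    rw [hA, hS] at key
    have h0 : (z - z⁻¹)^2 = 0 := by linear_combination key
    have h1 : z - z⁻¹ = 0 := by
      exact pow_eq_zero_iff (by norm_num) |>.mp h0
    have h2 : z = z⁻¹ := sub_eq_zero.mp h1
    have h3 : (z - 1) * (z + 1) = 0 := by
      have hm : z * z⁻¹ = 1 := mul_inv_cancel₀ hz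
      linear_combination z * h2 + hm
    rcases mul_eq_zero.mp h3 with h | h
    · exact hz2 (sub_eq_zero.mp h)
    · exact hz3 (eq_neg_of_add_eq_zero_left h)
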